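/- For every k ≥ 1, |AMS_{3k−1}| = 2|AMS_{3k−2}|. -/

import Mathlib

/-- `w` (read on positions `1,…,2n`) is a Stirling permutation of order `n`:
each value `1,…,n` appears exactly twice, all letters lie in `[1,n]`, and every
value between the two copies of a value exceeds it. -/
def IsStirling (n : ℕ) (w : ℕ → ℕ) : Prop :=
  (∀ k, 1 ≤ k → k ≤ n → ((Finset.Icc 1 (2*n)).filter (fun i => w i = k)).card = 2) ∧
  (∀ i, 1 ≤ i → i ≤ 2*n → 1 ≤ w i ∧ w i ≤ n) ∧
  (∀ i j l, 1 ≤ i → i < j → j < l → l ≤ 2*n → w i = w l → w i < w j)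

/-- The set of mesas of `w`: values `m` with `w(i-1) < w(i) = w(i+1) = m > w(i+2)`
for some `2 ≤ i ≤ 2n-2`. -/
def MesaSet (n : ℕ) (w : ℕ → ℕ) : Set ℕ :=
  {m | ∃ i, 2 ≤ i ∧ i + 2 ≤ 2*n ∧ w (i-1) < w i ∧ w i = w (i+1) ∧ w (i+2) < w i ∧ w i = m}

/-- The collection of admissible mesa sets of order `n`. -/
def AMS (n : ℕ) : Set (Set ℕ) := {M | ∃ w, IsStirling n w ∧ MesaSet n w = M}

open Finset

namespace AMSAux

-- Numeric characterization of admissible mesa sets.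
open Classical in
noncomputable def Adm (n : ℕ) : Finset (Finset ℕ) :=
  (Finset.Icc 2 n).powerset.filter
    (fun M => ∀ t ∈ Finset.Icc 2 n, 3 * (M ∩ Finset.Icc 2 t).card < 2 * t)

lemma mem_Adm {n : ℕ} {M : Finset ℕ} :
    M ∈ Adm n ↔ M ⊆ Finset.Icc 2 n ∧
      ∀ t ∈ Finset.Icc 2 n, 3 * (M ∩ Finset.Icc 2 t).card < 2 * t := by
  simp [Adm]

/-- Start positions of mesas. -/
def startSet (n : ℕ) (w : ℕ → ℕ) : Finset ℕ :=
  (Finset.Icc 2 (2*n)).filter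
    (fun i => i+2 ≤ 2*n ∧ w (i-1) < w i ∧ w i = w (i+1) ∧ w (i+2) < w i)

lemma mem_startSet {n : ℕ} {w : ℕ → ℕ} {i : ℕ} : i ∈ startSet n w ↔
    2 ≤ i ∧ i+2 ≤ 2*n ∧ w (i-1) < w i ∧ w i = w (i+1) ∧ w (i+2) < w i := by
  simp only [startSet, Finset.mem_filter, Finset.mem_Icc]
  constructor
  · rintro ⟨⟨h2, _⟩, h⟩; exact ⟨h2, h⟩
  · rintro ⟨h2, h⟩; exact ⟨⟨h2, by omega⟩, h⟩

lemma mesaSet_eq (n : ℕ) (w : ℕ → ℕ) :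
    MesaSet n w = ↑((startSet n w).image w) := by
  ext m
  simp only [MesaSet, Set.mem_setOf_eq, Finset.coe_image, Set.mem_image,
    Finset.mem_coe, mem_startSet]
  constructor
  · rintro ⟨i, h1, h2, h3, h4, h5, rfl⟩; exact ⟨i, ⟨h1, h2, h3, h4, h5⟩, rfl⟩
  · rintro ⟨i, ⟨h1, h2, h3, h4, h5⟩, rfl⟩; exact ⟨i, h1, h2, h3, h4, h5, rfl⟩

/-- Mesa start positions are at least 3 apart. -/
lemma start_sep {n : ℕ} {w : ℕ → ℕ} {i i' : ℕ}
    (hi : i ∈ startSet n w) (hi' : i' ∈ startSet n w) (h : i < i') : i + 3 ≤ i' := by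
  rw [mem_startSet] at hi hi'
  by_contra h3
  have hcase : i' = i + 1 ∨ i' = i + 2 := by omega
  rcases hcase with rfl | rfl
  · have h1 : w (i + 1 - 1) < w (i+1) := hi'.2.2.1
    have : w i = w (i+1) := hi.2.2.2.1
    simp only [Nat.add_sub_cancel] at h1
    omega
  · have h1 : w (i + 2 - 1) < w (i+2) := hi'.2.2.1
    have h2 : w i = w (i+1) := hi.2.2.2.1
    have h4 : w (i+2) < w i := hi.2.2.2.2
    have : i + 2 - 1 = i + 1 := by omega
    rw [this] at h1
    omega

/-- The value map is injective on mesa start positions. -/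
lemma start_injOn {n : ℕ} {w : ℕ → ℕ} (hw : IsStirling n w) :
    Set.InjOn w (startSet n w) := by
  have key : ∀ i i', i ∈ startSet n w → i' ∈ startSet n w → i < i' → w i ≠ w i' := by
    intro i i' hi hi' hlt heq
    have hsep := start_sep hi hi' hlt
    rw [mem_startSet] at hi hi'
    have hm1 : 1 ≤ w i := by
      have := hi.2.2.1; omega
    have hmn : w i ≤ n := (hw.2.1 i (by omega) (by omega)).2
    have hcnt := hw.1 (w i) hm1 hmn
    have hsub : ({i, i+1, i', i'+1} : Finset ℕ) ⊆
        (Finset.Icc 1 (2*n)).filter (fun p => w p = w i) := by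
      intro p hp
      simp only [Finset.mem_insert, Finset.mem_singleton] at hp
      simp only [Finset.mem_filter, Finset.mem_Icc]
      rcases hp with rfl | rfl | rfl | rfl
      · exact ⟨⟨by omega, by omega⟩, rfl⟩
      · exact ⟨⟨by omega, by omega⟩, hi.2.2.2.1.symm⟩
      · exact ⟨⟨by omega, by omega⟩, heq.symm⟩
      · exact ⟨⟨by omega, by omega⟩, by rw [← hi'.2.2.2.1]; exact heq.symm⟩
    have e1 : i ∉ ({i+1, i', i'+1} : Finset ℕ) := by
      simp only [Finset.mem_insert, Finset.mem_singleton]; omega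
    have e2 : i+1 ∉ ({i', i'+1} : Finset ℕ) := by
      simp only [Finset.mem_insert, Finset.mem_singleton]; omega
    have e3 : i' ∉ ({i'+1} : Finset ℕ) := by
      simp only [Finset.mem_singleton]; omega
    have hcard : ({i, i+1, i', i'+1} : Finset ℕ).card = 4 := by
      rw [Finset.card_insert_of_notMem e1, Finset.card_insert_of_notMem e2,
        Finset.card_insert_of_notMem e3, Finset.card_singleton]
    have := Finset.card_le_card hsub
    omega
  intro i hi i' hi' heq
  rcases lt_trichotomy i i' with h | h | h
  · exact absurd heq (key i i' hi hi' h)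
  · exact h
  · exact absurd heq.symm (key i' i hi' hi h)

lemma inter_eq_self_of_subset {M : Finset ℕ} {a b : ℕ} (h : M ⊆ Finset.Icc 2 a)
    (hab : a ≤ b) : M ∩ Finset.Icc 2 b = M := by
  apply Finset.inter_eq_left.mpr
  intro x hx
  have := h hx
  simp only [Finset.mem_Icc] at this ⊢
  omega

/-- Counting bound: any Stirling permutation has few small mesas. -/
lemma count_bound {n : ℕ} {w : ℕ → ℕ} (hw : IsStirling n w) {t : ℕ}
    (h2 : 2 ≤ t) (htn : t ≤ n) :
    3 * ((startSet n w).filter (fun i => w i ≤ t)).card < 2 * t := by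
  classical
  set T := (startSet n w).filter (fun i => w i ≤ t) with hT
  set S := (Finset.Icc 1 (2*n)).filter (fun i => w i ≤ t) with hS
  have hScard : S.card = 2 * t := by
    have hpart : S = (Finset.Icc 1 t).biUnion
        (fun v => (Finset.Icc 1 (2*n)).filter (fun i => w i = v)) := by
      ext p
      simp only [hS, Finset.mem_filter, Finset.mem_Icc, Finset.mem_biUnion]
      constructor
      · rintro ⟨⟨h1, h2n⟩, hle⟩
        exact ⟨w p, ⟨(hw.2.1 p h1 h2n).1, hle⟩, ⟨⟨h1, h2n⟩, rfl⟩⟩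
      · rintro ⟨v, ⟨hv1, hvt⟩, ⟨⟨h1, h2n⟩, heq⟩⟩
        exact ⟨⟨h1, h2n⟩, by omega⟩
    rw [hpart, Finset.card_biUnion]
    · have hc : ∀ v ∈ Finset.Icc 1 t,
          ((Finset.Icc 1 (2*n)).filter (fun i => w i = v)).card = 2 := by
        intro v hv
        simp only [Finset.mem_Icc] at hv
        exact hw.1 v hv.1 (le_trans hv.2 htn)
      rw [Finset.sum_congr rfl hc, Finset.sum_const, Nat.card_Icc, smul_eq_mul]
      omega
    · intro x hx y hy hxy
      rw [Function.onFun, Finset.disjoint_left]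
      intro p hp hp'
      simp only [Finset.mem_filter] at hp hp'
      exact hxy (hp.2 ▸ hp'.2 ▸ rfl)
  rcases T.eq_empty_or_nonempty with h | hne
  · rw [h, Finset.card_empty]
    omega
  · have hi0T : T.min' hne ∈ T := T.min'_mem hne
    set i0 := T.min' hne with hi0
    have hi0s : i0 ∈ startSet n w := (Finset.mem_filter.mp hi0T).1
    have hi0m := mem_startSet.mp hi0s
    have hi0t : w i0 ≤ t := (Finset.mem_filter.mp hi0T).2
    set U := insert (i0 - 1) (T.biUnion (fun i => ({i, i+1, i+2} : Finset ℕ))) with hU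
    have hdisj : ∀ x ∈ T, ∀ y ∈ T, x ≠ y →
        Disjoint ({x, x+1, x+2} : Finset ℕ) ({y, y+1, y+2} : Finset ℕ) := by
      intro x hx y hy hxy
      have hxs : x ∈ startSet n w := (Finset.mem_filter.mp hx).1
      have hys : y ∈ startSet n w := (Finset.mem_filter.mp hy).1
      have hsep : x + 3 ≤ y ∨ y + 3 ≤ x := by
        rcases lt_or_gt_of_ne hxy with h | h
        · exact Or.inl (start_sep hxs hys h)
        · exact Or.inr (start_sep hys hxs h)
      rw [Finset.disjoint_left]
      intro p hp hp'
      simp only [Finset.mem_insert, Finset.mem_singleton] at hp hp'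
      omega
    have hnotmem : i0 - 1 ∉ T.biUnion (fun i => ({i, i+1, i+2} : Finset ℕ)) := by
      simp only [Finset.mem_biUnion]
      rintro ⟨i, hi, hmem⟩
      have : i0 ≤ i := Finset.min'_le T i hi
      simp only [Finset.mem_insert, Finset.mem_singleton] at hmem
      have h2i0 : 2 ≤ i0 := hi0m.1
      omega
    have hUcard : U.card = 3 * T.card + 1 := by
      rw [hU, Finset.card_insert_of_notMem hnotmem, Finset.card_biUnion hdisj]
      have hc3 : ∀ i ∈ T, ({i, i+1, i+2} : Finset ℕ).card = 3 := by
        intro i _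
        rw [Finset.card_insert_of_notMem (by
            simp only [Finset.mem_insert, Finset.mem_singleton]; omega),
          Finset.card_insert_of_notMem (by
            simp only [Finset.mem_singleton]; omega),
          Finset.card_singleton]
      rw [Finset.sum_congr rfl hc3, Finset.sum_const, smul_eq_mul]
      omega
    have hUS : U ⊆ S := by
      intro p hp
      rw [hU] at hp
      rcases Finset.mem_insert.mp hp with rfl | hp'
      · simp only [hS, Finset.mem_filter, Finset.mem_Icc]
        have h2i0 : 2 ≤ i0 := hi0m.1
        have := hi0m.2.2.1
        refine ⟨⟨by omega, by omega⟩, by omega⟩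
      · simp only [Finset.mem_biUnion] at hp'
        obtain ⟨i, hiT, hpmem⟩ := hp'
        have his : i ∈ startSet n w := (Finset.mem_filter.mp hiT).1
        have him := mem_startSet.mp his
        have hit : w i ≤ t := (Finset.mem_filter.mp hiT).2
        simp only [Finset.mem_insert, Finset.mem_singleton] at hpmem
        simp only [hS, Finset.mem_filter, Finset.mem_Icc]
        have heq1 := him.2.2.2.1
        have hlt2 := him.2.2.2.2
        rcases hpmem with rfl | rfl | rfl
        · exact ⟨⟨by omega, by omega⟩, hit⟩
        · exact ⟨⟨by omega, by omega⟩, by omega⟩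
        · exact ⟨⟨by omega, by omega⟩, by omega⟩
    have := Finset.card_le_card hUS
    omega

/-- The mesa set of a Stirling permutation is in `Adm n`. -/
lemma image_mem_Adm {n : ℕ} {w : ℕ → ℕ} (hw : IsStirling n w) :
    (startSet n w).image w ∈ Adm n := by
  rw [mem_Adm]
  constructor
  · intro m hm
    simp only [Finset.mem_image] at hm
    obtain ⟨i, hi, rfl⟩ := hm
    rw [mem_startSet] at hi
    have hr := hw.2.1 i (by omega) (by omega)
    have hr' := (hw.2.1 (i-1) (by omega) (by omega)).1
    have := hi.2.2.1
    simp only [Finset.mem_Icc]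
    omega
  · intro t ht
    simp only [Finset.mem_Icc] at ht
    have himg : (startSet n w).image w ∩ Finset.Icc 2 t =
        ((startSet n w).filter (fun i => w i ≤ t)).image w := by
      ext m
      simp only [Finset.mem_inter, Finset.mem_image, Finset.mem_Icc, Finset.mem_filter]
      constructor
      · rintro ⟨⟨i, hi, rfl⟩, h2m, hmt⟩; exact ⟨i, ⟨hi, hmt⟩, rfl⟩
      · rintro ⟨i, ⟨hi, hit⟩, rfl⟩
        refine ⟨⟨i, hi, rfl⟩, ?_, hit⟩
        rw [mem_startSet] at hi
        have hr' := (hw.2.1 (i-1) (by omega) (by omega)).1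
        have := hi.2.2.1
        omega
    rw [himg, Finset.card_image_of_injOn
      ((start_injOn hw).mono (fun x hx => by
        simp only [Finset.coe_filter, Set.mem_setOf_eq] at hx
        exact Finset.mem_coe.mpr hx.1))]
    exact count_bound hw ht.1 ht.2

/-- Appending `n+1 n+1` to a Stirling permutation of order `n`. -/
lemma append_lemma {n : ℕ} {w' : ℕ → ℕ} (hn : 1 ≤ n) (hw' : IsStirling n w')
    (W : ℕ → ℕ) (hWa : ∀ p, p ≤ 2*n → W p = w' p) (hWb : ∀ p, 2*n < p → W p = n+1) :
    IsStirling (n+1) W ∧ MesaSet (n+1) W = MesaSet n w' := by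
  have hrange := hw'.2.1
  constructor
  · refine ⟨?_, ?_, ?_⟩
    · intro k hk1 hkn
      rcases Nat.lt_or_ge k (n+1) with hk | hk
      · have heqf : (Finset.Icc 1 (2*(n+1))).filter (fun i => W i = k)
            = (Finset.Icc 1 (2*n)).filter (fun i => w' i = k) := by
          ext p
          simp only [Finset.mem_filter, Finset.mem_Icc]
          constructor
          · rintro ⟨⟨hp1, hp2⟩, hpk⟩
            rcases le_or_gt p (2*n) with h | h
            · exact ⟨⟨hp1, h⟩, by rw [← hWa p h]; exact hpk⟩
            · rw [hWb p h] at hpk; omega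
          · rintro ⟨⟨hp1, hp2⟩, hpk⟩
            exact ⟨⟨hp1, by omega⟩, by rw [hWa p hp2]; exact hpk⟩
        rw [heqf]
        exact hw'.1 k hk1 (by omega)
      · have hk' : k = n+1 := by omega
        subst hk'
        have heqf : (Finset.Icc 1 (2*(n+1))).filter (fun i => W i = n+1)
            = {2*n+1, 2*n+2} := by
          ext p
          simp only [Finset.mem_filter, Finset.mem_Icc, Finset.mem_insert,
            Finset.mem_singleton]
          constructor
          · rintro ⟨⟨hp1, hp2⟩, hpk⟩
            rcases le_or_gt p (2*n) with h | h
            · rw [hWa p h] at hpk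
              have := (hrange p hp1 h).2
              omega
            · omega
          · rintro (rfl | rfl)
            · exact ⟨⟨by omega, by omega⟩, hWb _ (by omega)⟩
            · exact ⟨⟨by omega, by omega⟩, hWb _ (by omega)⟩
        rw [heqf, Finset.card_insert_of_notMem
          (by simp only [Finset.mem_singleton]; omega), Finset.card_singleton]
    · intro i h1 h2
      rcases le_or_gt i (2*n) with h | h
      · rw [hWa i h]
        have := hrange i h1 h
        omega
      · rw [hWb i h]; omega
    · intro i j l h1 hij hjl hl heq
      rcases le_or_gt l (2*n) with h | h
      · rw [hWa i (by omega), hWa j (by omega)]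
        rw [hWa i (by omega), hWa l h] at heq
        exact hw'.2.2 i j l h1 hij hjl h heq
      · rw [hWb l h] at heq
        rcases le_or_gt i (2*n) with hi | hi
        · rw [hWa i hi] at heq
          have := (hrange i h1 hi).2
          omega
        · omega
  · ext m
    simp only [MesaSet, Set.mem_setOf_eq]
    constructor
    · rintro ⟨i, h2i, hi2, hlt1, heqq, hlt2, rfl⟩
      rcases le_or_gt (i+2) (2*n) with h | h
      · refine ⟨i, h2i, h, ?_, ?_, ?_, ?_⟩
        · rw [← hWa (i-1) (by omega), ← hWa i (by omega)]; exact hlt1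
        · rw [← hWa i (by omega), ← hWa (i+1) (by omega)]; exact heqq
        · rw [← hWa (i+2) (by omega), ← hWa i (by omega)]; exact hlt2
        · exact (hWa i (by omega)).symm
      · exfalso
        rcases (by omega : i + 2 = 2*n+1 ∨ i + 2 = 2*n+2) with he | he
        · rw [hWb (i+2) (by omega)] at hlt2
          have hWi : W i = w' i := hWa i (by omega)
          have := (hrange i (by omega) (by omega)).2
          omega
        · rw [hWb (i+1) (by omega)] at heqq
          have hWi : W i = w' i := hWa i (by omega)
          have := (hrange i (by omega) (by omega)).2
          omega
    · rintro ⟨i, h2i, hi2, hlt1, heqq, hlt2, rfl⟩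
      refine ⟨i, h2i, by omega, ?_, ?_, ?_, ?_⟩
      · rw [hWa (i-1) (by omega), hWa i (by omega)]; exact hlt1
      · rw [hWa i (by omega), hWa (i+1) (by omega)]; exact heqq
      · rw [hWa (i+2) (by omega), hWa i (by omega)]; exact hlt2
      · exact hWa i (by omega)

/-- Inserting `n+1 n+1` at a free cut `c`. -/
lemma insert_lemma {n : ℕ} {w' : ℕ → ℕ} (hn : 1 ≤ n) (hw' : IsStirling n w')
    {c : ℕ} (hc1 : 1 ≤ c) (hc2 : c + 1 ≤ 2*n)
    (hfree : ∀ i ∈ startSet n w', c + 1 < i ∨ i + 1 < c)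
    (W : ℕ → ℕ)
    (hWa : ∀ p, p ≤ c → W p = w' p)
    (hWb : ∀ p, c < p → p ≤ c + 2 → W p = n+1)
    (hWc : ∀ p, c + 2 < p → W p = w' (p-2)) :
    IsStirling (n+1) W ∧ MesaSet (n+1) W = MesaSet n w' ∪ {(n+1 : ℕ)} := by
  have hrange := hw'.2.1
  have key3 := hw'.2.2
  have hWle : ∀ p, 1 ≤ p → p ≤ 2*(n+1) → ¬(c < p ∧ p ≤ c+2) → W p ≤ n ∧ 1 ≤ W p := by
    intro p h1 h2 hmid
    rcases le_or_gt p c with h | h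
    · rw [hWa p h]
      have := hrange p h1 (by omega)
      omega
    · have h3 : c + 2 < p := by omega
      rw [hWc p h3]
      have := hrange (p-2) (by omega) (by omega)
      omega
  constructor
  · refine ⟨?_, ?_, ?_⟩
    · intro k hk1 hkn
      rcases Nat.lt_or_ge k (n+1) with hk | hk
      · have hkn' : k ≤ n := by omega
        have hmidv : ∀ p, c < p → p ≤ c + 2 → W p ≠ k := by
          intro p h1 h2
          rw [hWb p h1 h2]; omega
        refine Eq.trans (Finset.card_bij' (fun p _ => if p ≤ c then p else p - 2)
          (fun q _ => if q ≤ c then q else q + 2) ?_ ?_ ?_ ?_) (hw'.1 k hk1 hkn')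
        · intro p hp
          simp only [Finset.mem_filter, Finset.mem_Icc] at hp ⊢
          obtain ⟨⟨h1, h2⟩, hk'⟩ := hp
          rcases le_or_gt p c with h | h
          · rw [if_pos h]
            exact ⟨⟨h1, by omega⟩, by rw [← hWa p h]; exact hk'⟩
          · have h3 : c + 2 < p := by
              by_contra hh
              exact hmidv p (by omega) (by omega) hk'
            rw [if_neg (by omega)]
            exact ⟨⟨by omega, by omega⟩, by rw [← hWc p h3]; exact hk'⟩
        · intro q hq
          simp only [Finset.mem_filter, Finset.mem_Icc] at hq ⊢
          obtain ⟨⟨h1, h2⟩, hk'⟩ := hq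
          rcases le_or_gt q c with h | h
          · rw [if_pos h]
            exact ⟨⟨h1, by omega⟩, by rw [hWa q h]; exact hk'⟩
          · rw [if_neg (by omega)]
            refine ⟨⟨by omega, by omega⟩, ?_⟩
            rw [hWc (q+2) (by omega)]
            simpa using hk'
        · intro p hp
          simp only [Finset.mem_filter, Finset.mem_Icc] at hp
          obtain ⟨⟨h1, h2⟩, hk'⟩ := hp
          have h3 : p ≤ c ∨ c + 2 < p := by
            by_contra hh
            push_neg at hh
            exact hmidv p (by omega) (by omega) hk'
          beta_reduce
          split_ifs <;> omega
        · intro q hq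
          simp only [Finset.mem_filter, Finset.mem_Icc] at hq
          obtain ⟨⟨h1, h2⟩, hk'⟩ := hq
          beta_reduce
          split_ifs <;> omega
      · have hk' : k = n+1 := by omega
        subst hk'
        have heqf : (Finset.Icc 1 (2*(n+1))).filter (fun i => W i = n+1)
            = {c+1, c+2} := by
          ext p
          simp only [Finset.mem_filter, Finset.mem_Icc, Finset.mem_insert,
            Finset.mem_singleton]
          constructor
          · rintro ⟨⟨h1, h2⟩, hpk⟩
            by_contra hne
            push_neg at hne
            have hnm : ¬(c < p ∧ p ≤ c+2) := by omega
            have := (hWle p h1 h2 hnm).1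
            omega
          · rintro (rfl | rfl)
            · exact ⟨⟨by omega, by omega⟩, hWb _ (by omega) (by omega)⟩
            · exact ⟨⟨by omega, by omega⟩, hWb _ (by omega) (by omega)⟩
        rw [heqf, Finset.card_insert_of_notMem
          (by simp only [Finset.mem_singleton]; omega), Finset.card_singleton]
    · intro i h1 h2
      by_cases hmid : c < i ∧ i ≤ c + 2
      · rw [hWb i hmid.1 hmid.2]; omega
      · have := hWle i h1 h2 hmid
        omega
    · intro i j l h1 hij hjl hl heq
      by_cases hi : c < i ∧ i ≤ c + 2
      · have hWi := hWb i hi.1 hi.2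
        have hWl : W l = n+1 := by rw [← heq, hWi]
        have hlmid : c < l ∧ l ≤ c + 2 := by
          by_contra hh
          have := (hWle l (by omega) hl hh).1
          omega
        omega
      · have hWi := (hWle i h1 (by omega) hi).1
        by_cases hj : c < j ∧ j ≤ c + 2
        · rw [hWb j hj.1 hj.2]; omega
        · by_cases hl' : c < l ∧ l ≤ c + 2
          · have := hWb l hl'.1 hl'.2
            omega
          · have hi' : W i = w' (if i ≤ c then i else i - 2) := by
              rcases le_or_gt i c with h | h
              · rw [if_pos h]; exact hWa i h
              · rw [if_neg (by omega)]; exact hWc i (by omega)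
            have hj' : W j = w' (if j ≤ c then j else j - 2) := by
              rcases le_or_gt j c with h | h
              · rw [if_pos h]; exact hWa j h
              · rw [if_neg (by omega)]; exact hWc j (by omega)
            have hl'' : W l = w' (if l ≤ c then l else l - 2) := by
              rcases le_or_gt l c with h | h
              · rw [if_pos h]; exact hWa l h
              · rw [if_neg (by omega)]; exact hWc l (by omega)
            rw [hi', hj']
            rw [hi', hl''] at heq
            refine key3 _ _ _ ?_ ?_ ?_ ?_ heq
            · split_ifs <;> omega
            · split_ifs <;> omega
            · split_ifs <;> omega
            · split_ifs <;> omega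
  · ext m
    simp only [MesaSet, Set.mem_setOf_eq, Set.mem_union, Set.mem_singleton_iff]
    constructor
    · rintro ⟨p, hp2, hp22, hlt1, heqq, hlt2, rfl⟩
      by_cases hmid : c < p ∧ p ≤ c + 2
      · rcases (by omega : p = c+1 ∨ p = c+2) with rfl | rfl
        · exact Or.inr (hWb _ (by omega) (by omega))
        · exfalso
          rw [hWb (c+2) (by omega) (by omega), hWc (c+2+1) (by omega)] at heqq
          have harith : c+2+1-2 = c+1 := by omega
          rw [harith] at heqq
          have := hrange (c+1) (by omega) (by omega)
          omega
      · have hWp := (hWle p (by omega) (by omega) hmid).1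
        have hnm1 : ¬(c < p+1 ∧ p+1 ≤ c+2) := by
          intro hh
          rw [hWb (p+1) hh.1 hh.2] at heqq
          omega
        have hnm2 : ¬(c < p-1 ∧ p-1 ≤ c+2) := by
          intro hh
          rw [hWb (p-1) hh.1 hh.2] at hlt1
          omega
        have hnm3 : ¬(c < p+2 ∧ p+2 ≤ c+2) := by
          intro hh
          rw [hWb (p+2) hh.1 hh.2] at hlt2
          omega
        left
        rcases (by omega : p + 2 ≤ c ∨ c + 2 < p - 1) with hcase | hcase
        · refine ⟨p, hp2, by omega, ?_, ?_, ?_, (hWa p (by omega)).symm⟩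
          · rw [← hWa (p-1) (by omega), ← hWa p (by omega)]; exact hlt1
          · rw [← hWa p (by omega), ← hWa (p+1) (by omega)]; exact heqq
          · rw [← hWa (p+2) (by omega), ← hWa p (by omega)]; exact hlt2
        · refine ⟨p-2, by omega, by omega, ?_, ?_, ?_, (hWc p (by omega)).symm⟩
          · have e1 : p - 2 - 1 = p - 3 := by omega
            have e2 : W (p-1) = w' (p-3) := by
              rw [hWc (p-1) (by omega)]; congr 1
            have e3 : W p = w' (p-2) := hWc p (by omega)
            rw [e1, ← e2, ← e3]; exact hlt1
          · have e3 : W p = w' (p-2) := hWc p (by omega)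
            have e4 : W (p+1) = w' (p-2+1) := by
              rw [hWc (p+1) (by omega)]; congr 1; omega
            rw [← e3, ← e4]; exact heqq
          · have e3 : W p = w' (p-2) := hWc p (by omega)
            have e5 : W (p+2) = w' (p-2+2) := by
              rw [hWc (p+2) (by omega)]; congr 1; omega
            rw [← e3, ← e5]; exact hlt2
    · rintro (⟨i, h2i, hi2, hlt1, heqq, hlt2, rfl⟩ | rfl)
      · have his : i ∈ startSet n w' := mem_startSet.mpr ⟨h2i, hi2, hlt1, heqq, hlt2⟩
        rcases hfree i his with hcase | hcase
        · have e1 : W (i+1) = w' (i-1) := by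
            rw [hWc (i+1) (by omega)]; congr 1
          have e2 : W (i+2) = w' i := by
            rw [hWc (i+2) (by omega)]; congr 1
          have e3 : W (i+2+1) = w' (i+1) := by
            rw [hWc (i+2+1) (by omega)]; congr 1
          have e4 : W (i+2+2) = w' (i+2) := by
            rw [hWc (i+2+2) (by omega)]; congr 1
          refine ⟨i+2, by omega, by omega, ?_, ?_, ?_, e2⟩
          · have e : i+2-1 = i+1 := by omega
            rw [e, e1, e2]; exact hlt1
          · rw [e2, e3]; exact heqq
          · rw [e4, e2]; exact hlt2
        · refine ⟨i, h2i, by omega, ?_, ?_, ?_, hWa i (by omega)⟩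
          · rw [hWa (i-1) (by omega), hWa i (by omega)]; exact hlt1
          · rw [hWa i (by omega), hWa (i+1) (by omega)]; exact heqq
          · rw [hWa (i+2) (by omega), hWa i (by omega)]; exact hlt2
      · refine ⟨c+1, by omega, by omega, ?_, ?_, ?_, hWb (c+1) (by omega) (by omega)⟩
        · have e : c + 1 - 1 = c := by omega
          rw [e, hWa c (le_refl c), hWb (c+1) (by omega) (by omega)]
          have := hrange c (by omega) (by omega)
          omega
        · rw [hWb (c+1) (by omega) (by omega), hWb (c+1+1) (by omega) (by omega)]
        · rw [hWc (c+1+2) (by omega), hWb (c+1) (by omega) (by omega)]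
          have harith : c+1+2-2 = c+1 := by omega
          rw [harith]
          have := hrange (c+1) (by omega) (by omega)
          omega

/-- Sufficiency: every `M ∈ Adm n` is realized as a mesa set. -/
lemma suff : ∀ n, 1 ≤ n → ∀ M ∈ Adm n, ∃ w, IsStirling n w ∧ MesaSet n w = ↑M := by
  intro n
  induction n with
  | zero => intro h; exact absurd h (by omega)
  | succ n ih =>
    intro _ M hM
    rw [mem_Adm] at hM
    obtain ⟨hsub, hbd⟩ := hM
    rcases Nat.eq_zero_or_pos n with rfl | hn
    · have hM0 : M = ∅ := by
        rw [Finset.eq_empty_iff_forall_notMem]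
        intro x hx
        have := hsub hx
        simp only [Finset.mem_Icc] at this
        omega
      subst hM0
      refine ⟨fun _ => 1, ⟨?_, ?_, ?_⟩, ?_⟩
      · intro k h1 h2
        have hk : k = 1 := by omega
        subst hk
        rw [Finset.filter_true_of_mem (fun i _ => rfl), Nat.card_Icc]
      · intro i h1 h2
        exact ⟨le_refl _, Nat.le_refl _⟩
      · intro i j l h1 hij hjl hl heq
        exfalso
        omega
      · ext m
        simp only [MesaSet, Set.mem_setOf_eq, Finset.coe_empty, Set.mem_empty_iff_false,
          iff_false, not_exists]
        intro i
        rintro ⟨h1, h2, -⟩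
        omega
    · by_cases hmem : (n+1) ∈ M
      · -- insert case
        have hM' : M.erase (n+1) ∈ Adm n := by
          rw [mem_Adm]
          constructor
          · intro x hx
            have h1 := hsub (Finset.mem_of_mem_erase hx)
            have h2 := Finset.ne_of_mem_erase hx
            simp only [Finset.mem_Icc] at h1 ⊢
            omega
          · intro t ht
            simp only [Finset.mem_Icc] at ht
            have heqi : M.erase (n+1) ∩ Finset.Icc 2 t = M ∩ Finset.Icc 2 t := by
              ext x
              simp only [Finset.mem_inter, Finset.mem_erase, Finset.mem_Icc]
              constructor
              · rintro ⟨⟨_, h1⟩, h2⟩; exact ⟨h1, h2⟩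
              · rintro ⟨h1, h2⟩; exact ⟨⟨by omega, h1⟩, h2⟩
            rw [heqi]
            exact hbd t (by simp only [Finset.mem_Icc]; omega)
        obtain ⟨w', hw', hmesa'⟩ := ih hn (M.erase (n+1)) hM'
        have himg' : (startSet n w').image w' = M.erase (n+1) :=
          Finset.coe_injective (by rw [← mesaSet_eq]; exact hmesa')
        have hcard : (startSet n w').card = (M.erase (n+1)).card := by
          have := Finset.card_image_of_injOn (start_injOn hw')
          rw [himg'] at this
          exact this.symm
        have hbound : 3 * (M.erase (n+1)).card + 2 ≤ 2*n := by
          have hb := hbd (n+1) (by simp only [Finset.mem_Icc]; omega)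
          rw [inter_eq_self_of_subset hsub (le_refl _)] at hb
          have hce : (M.erase (n+1)).card + 1 = M.card :=
            Finset.card_erase_add_one hmem
          omega
        have hbadcard : ((startSet n w').biUnion
            (fun i => ({i-1, i, i+1} : Finset ℕ))).card ≤ 3 * (M.erase (n+1)).card := by
          refine le_trans Finset.card_biUnion_le ?_
          have hle3 : ∀ i ∈ startSet n w', ({i-1, i, i+1} : Finset ℕ).card ≤ 3 := by
            intro i _
            refine le_trans (Finset.card_insert_le _ _) (Nat.succ_le_succ ?_)
            refine le_trans (Finset.card_insert_le _ _) (Nat.succ_le_succ ?_)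
            simp
          calc ∑ i ∈ startSet n w', ({i-1, i, i+1} : Finset ℕ).card
              ≤ ∑ _i ∈ startSet n w', 3 := Finset.sum_le_sum hle3
            _ = 3 * (M.erase (n+1)).card := by
                rw [Finset.sum_const, smul_eq_mul, hcard]; ring
        have hex : ∃ c ∈ Finset.Icc 1 (2*n-1), c ∉ (startSet n w').biUnion
            (fun i => ({i-1, i, i+1} : Finset ℕ)) := by
          by_contra h
          push_neg at h
          have hss := Finset.card_le_card (fun x hx => h x hx)
          rw [Nat.card_Icc] at hss
          omega
        obtain ⟨c, hcI, hcbad⟩ := hex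
        simp only [Finset.mem_Icc] at hcI
        have hfree : ∀ i ∈ startSet n w', c + 1 < i ∨ i + 1 < c := by
          intro i hi
          have h2i : 2 ≤ i := (mem_startSet.mp hi).1
          have hno : c ∉ ({i-1, i, i+1} : Finset ℕ) :=
            fun h => hcbad (Finset.mem_biUnion.mpr ⟨i, hi, h⟩)
          simp only [Finset.mem_insert, Finset.mem_singleton] at hno
          push_neg at hno
          omega
        obtain ⟨hst, hms⟩ := insert_lemma hn hw' hcI.1 (by omega) hfree
          (fun i => if i ≤ c then w' i else if i ≤ c+2 then n+1 else w' (i-2))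
          (fun p hp => if_pos hp)
          (fun p h1 h2 => by
            show (if p ≤ c then w' p else if p ≤ c+2 then n+1 else w' (p-2)) = n+1
            rw [if_neg (by omega), if_pos h2])
          (fun p h => by
            show (if p ≤ c then w' p else if p ≤ c+2 then n+1 else w' (p-2)) = w' (p-2)
            rw [if_neg (by omega), if_neg (by omega)])
        refine ⟨_, hst, ?_⟩
        rw [hms, hmesa']
        ext x
        simp only [Set.mem_union, Finset.mem_coe, Finset.mem_erase,
          Set.mem_singleton_iff]
        constructor
        · rintro (⟨_, h⟩ | rfl)
          · exact h
          · exact hmem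
        · intro hx
          by_cases hxe : x = n+1
          · exact Or.inr hxe
          · exact Or.inl ⟨hxe, hx⟩
      · -- append case
        have hMn : M ∈ Adm n := by
          rw [mem_Adm]
          constructor
          · intro x hx
            have h1 := hsub hx
            have h2 : x ≠ n+1 := fun h => hmem (h ▸ hx)
            simp only [Finset.mem_Icc] at h1 ⊢
            omega
          · intro t ht
            simp only [Finset.mem_Icc] at ht
            exact hbd t (by simp only [Finset.mem_Icc]; omega)
        obtain ⟨w', hw', hmesa'⟩ := ih hn M hMn
        obtain ⟨hst, hms⟩ := append_lemma hn hw'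
          (fun i => if i ≤ 2*n then w' i else n+1)
          (fun p hp => if_pos hp) (fun p hp => if_neg (by omega))
        exact ⟨_, hst, by rw [hms, hmesa']⟩

lemma AMS_eq (n : ℕ) (hn : 1 ≤ n) : AMS n = (fun F : Finset ℕ => (F : Set ℕ)) '' ↑(Adm n) := by
  ext S
  constructor
  · rintro ⟨w, hw, rfl⟩
    exact ⟨(startSet n w).image w, by simpa using image_mem_Adm hw, (mesaSet_eq n w).symm⟩
  · rintro ⟨F, hF, rfl⟩
    obtain ⟨w, hw, hm⟩ := suff n hn F (by simpa using hF)
    exact ⟨w, hw, hm⟩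

lemma ncard_AMS (n : ℕ) (hn : 1 ≤ n) : (AMS n).ncard = (Adm n).card := by
  rw [AMS_eq n hn, Set.ncard_image_of_injective _ Finset.coe_injective,
    Set.ncard_coe_finset]

/-- The key counting step. -/
lemma adm_step (m : ℕ) (h3 : m % 3 = 0) : (Adm (m+2)).card = 2 * (Adm (m+1)).card := by
  classical
  have hsplit := Finset.card_filter_add_card_filter_not
    (s := Adm (m+2)) (p := fun M => (m+2) ∈ M)
  have h1 : (Adm (m+2)).filter (fun M => (m+2) ∉ M) = Adm (m+1) := by
    ext M
    simp only [Finset.mem_filter, mem_Adm]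
    constructor
    · rintro ⟨⟨hsub, hbd⟩, hnm⟩
      refine ⟨fun x hx => ?_, fun t ht => hbd t ?_⟩
      · have h := hsub hx
        have hne : x ≠ m+2 := fun h' => hnm (h' ▸ hx)
        simp only [Finset.mem_Icc] at h ⊢
        omega
      · simp only [Finset.mem_Icc] at ht ⊢
        omega
    · rintro ⟨hsub, hbd⟩
      have hnm : (m+2) ∉ M := fun h => by
        have := hsub h
        simp only [Finset.mem_Icc] at this
        omega
      refine ⟨⟨fun x hx => ?_, ?_⟩, hnm⟩
      · have := hsub hx
        simp only [Finset.mem_Icc] at this ⊢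
        omega
      · intro t ht
        simp only [Finset.mem_Icc] at ht
        rcases Nat.lt_or_ge t (m+2) with h | h
        · exact hbd t (by simp only [Finset.mem_Icc]; omega)
        · have htm : t = m+2 := by omega
          subst htm
          rw [inter_eq_self_of_subset hsub (by omega)]
          rcases M.eq_empty_or_nonempty with rfl | ⟨x, hx⟩
          · simp only [Finset.card_empty]
            omega
          · have hx2 := hsub hx
            simp only [Finset.mem_Icc] at hx2
            have hb := hbd (m+1) (by simp only [Finset.mem_Icc]; omega)
            rw [inter_eq_self_of_subset hsub (by omega)] at hb
            omega
  have h2 : ((Adm (m+2)).filter (fun M => (m+2) ∈ M)).card = (Adm (m+1)).card := by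
    refine Finset.card_bij' (fun M _ => M.erase (m+2)) (fun M' _ => insert (m+2) M')
      ?hi ?hj ?li ?ri
    case hi =>
      intro M hM
      simp only [Finset.mem_filter, mem_Adm] at hM
      obtain ⟨⟨hsub, hbd⟩, hmem⟩ := hM
      rw [mem_Adm]
      constructor
      · intro x hx
        have h := hsub (Finset.mem_of_mem_erase hx)
        have hne := Finset.ne_of_mem_erase hx
        simp only [Finset.mem_Icc] at h ⊢
        omega
      · intro t ht
        simp only [Finset.mem_Icc] at ht
        have heq : M.erase (m+2) ∩ Finset.Icc 2 t = M ∩ Finset.Icc 2 t := by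
          ext x
          simp only [Finset.mem_inter, Finset.mem_erase, Finset.mem_Icc]
          constructor
          · rintro ⟨⟨_, h1⟩, h2⟩; exact ⟨h1, h2⟩
          · rintro ⟨h1, h2⟩; exact ⟨⟨by omega, h1⟩, h2⟩
        rw [heq]
        exact hbd t (by simp only [Finset.mem_Icc]; omega)
    case hj =>
      intro M' hM'
      rw [mem_Adm] at hM'
      obtain ⟨hsub, hbd⟩ := hM'
      have hnm : (m+2) ∉ M' := fun h => by
        have := hsub h
        simp only [Finset.mem_Icc] at this
        omega
      simp only [Finset.mem_filter, mem_Adm]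
      refine ⟨⟨fun x hx => ?_, ?_⟩, Finset.mem_insert_self _ _⟩
      · rcases Finset.mem_insert.mp hx with rfl | hx'
        · simp only [Finset.mem_Icc]; omega
        · have := hsub hx'
          simp only [Finset.mem_Icc] at this ⊢
          omega
      · intro t ht
        simp only [Finset.mem_Icc] at ht
        rcases Nat.lt_or_ge t (m+2) with h | h
        · have heq : (insert (m+2) M') ∩ Finset.Icc 2 t = M' ∩ Finset.Icc 2 t := by
            ext x
            simp only [Finset.mem_inter, Finset.mem_insert, Finset.mem_Icc]
            constructor
            · rintro ⟨rfl | h1, h2⟩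
              · omega
              · exact ⟨h1, h2⟩
            · rintro ⟨h1, h2⟩; exact ⟨Or.inr h1, h2⟩
          rw [heq]
          exact hbd t (by simp only [Finset.mem_Icc]; omega)
        · have htm : t = m+2 := by omega
          subst htm
          have hsub2 : insert (m+2) M' ⊆ Finset.Icc 2 (m+2) := by
            intro x hx
            rcases Finset.mem_insert.mp hx with rfl | hx'
            · simp only [Finset.mem_Icc]; omega
            · have := hsub hx'
              simp only [Finset.mem_Icc] at this ⊢
              omega
          rw [inter_eq_self_of_subset hsub2 (le_refl _),
            Finset.card_insert_of_notMem hnm]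
          rcases M'.eq_empty_or_nonempty with rfl | ⟨x, hx⟩
          · simp only [Finset.card_empty]
            omega
          · have hx2 := hsub hx
            simp only [Finset.mem_Icc] at hx2
            have hb := hbd (m+1) (by simp only [Finset.mem_Icc]; omega)
            rw [inter_eq_self_of_subset hsub (le_refl _)] at hb
            omega
    case li =>
      intro M hM
      simp only [Finset.mem_filter] at hM
      exact Finset.insert_erase hM.2
    case ri =>
      intro M' hM'
      rw [mem_Adm] at hM'
      apply Finset.erase_insert
      intro h
      have := hM'.1 h
      simp only [Finset.mem_Icc] at this
      omega
  rw [h1] at hsplit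
  omega

end AMSAux

theorem AMS_card_3km1 (k : ℕ) (hk : 1 ≤ k) :
    (AMS (3*k-1)).ncard = 2 * (AMS (3*k-2)).ncard := by
  obtain ⟨m, hm, h1, h2⟩ : ∃ m, m % 3 = 0 ∧ 3*k-1 = m+2 ∧ 3*k-2 = m+1 :=
    ⟨3*(k-1), by omega, by omega, by omega⟩
  rw [h1, h2, AMSAux.ncard_AMS _ (by omega), AMSAux.ncard_AMS _ (by omega),
    AMSAux.adm_step m hm]
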